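/- Let m be a nonnegative integer and let P = J^m([2] × [2]) be the m-fold iterated order-ideal poset of [2] × [2]. Then the width of P equals 2, the poset (A_2(P), ≤_2) is a singleton (P has exactly one antichain of size 2), A_0(P) is a singleton, and (A_1(P), ≤_1) is isomorphic to P. -/

import Mathlib

/-- The product poset `[a] × [b]` of the chains `{1,…,a}` and `{1,…,b}`,
with the componentwise order. -/
abbrev Box (a b : ℕ) : Type :=
  {p : ℕ × ℕ // (1 ≤ p.1 ∧ p.1 ≤ a) ∧ (1 ≤ p.2 ∧ p.2 ≤ b)}

/-- Auxiliary: the `m`-fold iterate of the order-ideal construction `J` (realized as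
`LowerSet`, i.e. order ideals = downward-closed sets ordered by inclusion), bundled
with its partial order. -/
def JiterAux (Q : Type) [inst : PartialOrder Q] : ℕ → (T : Type) × PartialOrder T
  | 0 => ⟨Q, inst⟩
  | m + 1 =>
    letI := (JiterAux Q m).2
    ⟨LowerSet (JiterAux Q m).1, inferInstance⟩

/-- `J^m(Q)`: the `m`-fold iterated order-ideal poset of `Q`, with `J^0(Q) = Q`. -/
def Jiter (Q : Type) [PartialOrder Q] (m : ℕ) : Type := (JiterAux Q m).1

instance (Q : Type) [PartialOrder Q] (m : ℕ) : PartialOrder (Jiter Q m) :=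
  (JiterAux Q m).2

/-- The width of a poset: the maximum cardinality of an antichain. -/
noncomputable def widthP (P : Type*) [PartialOrder P] : ℕ :=
  sSup {k : ℕ | ∃ A : Finset P, IsAntichain (· ≤ ·) (A : Set P) ∧ A.card = k}


/-- `A_k(P)`: the set of antichains of `P` of cardinality exactly `k`. -/
def AkSet (P : Type*) [PartialOrder P] (k : ℕ) : Type _ :=
  {A : Finset P // IsAntichain (· ≤ ·) (A : Set P) ∧ A.card = k}

/-- The underlying finite set of elements of an antichain in `A_k(P)`. -/
def AkSet.carrier {P : Type*} [PartialOrder P] {k : ℕ} (A : AkSet P k) : Finset P :=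
  Subtype.val A

/-- `A ≺_k B` iff `A \ B = {a}` and `B \ A = {b}` are singletons with `a <_P b`. -/
def PrecK {P : Type*} [PartialOrder P] {k : ℕ} (A B : AkSet P k) : Prop :=
  ∃ a b : P,
    ((A.carrier : Set P) \ (B.carrier : Set P)) = {a} ∧
    ((B.carrier : Set P) \ (A.carrier : Set P)) = {b} ∧ a < b

/-- `≤_k`: the reflexive transitive closure of `≺_k` on `A_k(P)`. -/
def LeK {P : Type*} [PartialOrder P] {k : ℕ} : AkSet P k → AkSet P k → Prop :=
  Relation.ReflTransGen PrecK

/-- `A_k(P)` is equipped with the order `≤_k`. -/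
instance {P : Type*} [PartialOrder P] {k : ℕ} : LE (AkSet P k) := ⟨LeK⟩


/-- A poset with exactly one incomparable pair. -/
def GoodP (P : Type*) [PartialOrder P] : Prop :=
  ∃ a b : P, (¬ a ≤ b ∧ ¬ b ≤ a) ∧
    ∀ x y : P, ¬ x ≤ y → ¬ y ≤ x → (x = a ∧ y = b) ∨ (x = b ∧ y = a)

lemma goodP_lowerSet {P : Type*} [PartialOrder P] (h : GoodP P) : GoodP (LowerSet P) := by
  obtain ⟨a, b, ⟨hab, hba⟩, hu⟩ := h
  have key : ∀ (p q : P), ¬ p ≤ q → ¬ q ≤ p →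
      (∀ x y : P, ¬ x ≤ y → ¬ y ≤ x → (x = p ∧ y = q) ∨ (x = q ∧ y = p)) →
      ∀ I J : LowerSet P, p ∈ I → p ∉ J → q ∈ J → q ∉ I → I = LowerSet.Iic p := by
    intro p q hpq hqp hu' I J hpI hpJ hqJ hqI
    apply SetLike.ext
    intro z
    simp only [LowerSet.mem_Iic_iff]
    constructor
    · intro hz
      by_cases hzq : z ≤ q
      · -- z ∈ J
        have hzJ : z ∈ J := J.lower hzq hqJ
        by_cases hzp : z ≤ p
        · exact hzp
        · by_cases hpz : p ≤ z
          · exact absurd (J.lower hpz hzJ) hpJ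
          · rcases hu' z p hzp hpz with ⟨rfl, rfl⟩ | ⟨rfl, _⟩
            · exact absurd hzq hpq
            · exact absurd hz hqI
      · by_cases hqz : q ≤ z
        · exact absurd (I.lower hqz hz) hqI
        · rcases hu' z q hzq hqz with ⟨rfl, _⟩ | ⟨rfl, _⟩
          · exact le_refl _
          · exact absurd hz hqI
    · intro hz
      exact I.lower hz hpI
  have hu' : ∀ x y : P, ¬ x ≤ y → ¬ y ≤ x → (x = b ∧ y = a) ∨ (x = a ∧ y = b) :=
    fun x y h1 h2 => (hu x y h1 h2).symm
  refine ⟨LowerSet.Iic a, LowerSet.Iic b, ⟨?_, ?_⟩, ?_⟩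
  · intro hle
    exact hab (by simpa using hle (LowerSet.mem_Iic_iff.2 (le_refl a)))
  · intro hle
    exact hba (by simpa using hle (LowerSet.mem_Iic_iff.2 (le_refl b)))
  · intro I J hIJ hJI
    change ¬ (∀ ⦃x : P⦄, x ∈ I → x ∈ J) at hIJ
    change ¬ (∀ ⦃x : P⦄, x ∈ J → x ∈ I) at hJI
    push_neg at hIJ hJI
    obtain ⟨x, hxI, hxJ⟩ := hIJ
    obtain ⟨y, hyJ, hyI⟩ := hJI
    have hxy : ¬ x ≤ y := fun hle => hxJ (J.lower hle hyJ)
    have hyx : ¬ y ≤ x := fun hle => hyI (I.lower hle hxI)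
    rcases hu x y hxy hyx with ⟨rfl, rfl⟩ | ⟨rfl, rfl⟩
    · exact Or.inl ⟨key x y hab hba hu I J hxI hxJ hyJ hyI,
        key y x hba hab hu' J I hyJ hyI hxI hxJ⟩
    · exact Or.inr ⟨key x y hba hab hu' I J hxI hxJ hyJ hyI,
        key y x hab hba hu J I hyJ hyI hxI hxJ⟩

lemma goodP_box : GoodP (Box 2 2) := by
  refine ⟨⟨(1, 2), by norm_num⟩, ⟨(2, 1), by norm_num⟩, ⟨?_, ?_⟩, ?_⟩
  · simp [Subtype.mk_le_mk, Prod.le_def]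
  · simp [Subtype.mk_le_mk, Prod.le_def]
  · rintro ⟨⟨x1, x2⟩, hx⟩ ⟨⟨y1, y2⟩, hy⟩ h1 h2
    simp only [Subtype.mk_le_mk, Prod.mk_le_mk, not_and_or, not_le] at h1 h2
    simp only [Subtype.mk.injEq, Prod.mk.injEq]
    omega

lemma goodP_jiter (m : ℕ) : GoodP (Jiter (Box 2 2) m) := by
  induction m with
  | zero => exact goodP_box
  | succ n ih => exact goodP_lowerSet (P := Jiter (Box 2 2) n) ih

section Consequences

variable {P : Type*} [PartialOrder P]

lemma antichain_pair {a b : P} (hab : ¬ a ≤ b) (hba : ¬ b ≤ a) :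
    IsAntichain (· ≤ ·) (({a, b} : Set P)) := by
  rintro x (rfl | rfl) y (rfl | rfl) hne hle
  · exact hne rfl
  · exact hab hle
  · exact hba hle
  · exact hne rfl

lemma antichain_subset_pair (h : GoodP P) :
    ∀ A : Finset P, IsAntichain (· ≤ ·) (A : Set P) → A.card ≤ 2 := by
  classical
  obtain ⟨a, b, ⟨hab, hba⟩, hu⟩ := h
  have hne : a ≠ b := fun he => hab (he ▸ le_refl a)
  intro A hA
  by_cases hc : A.card ≤ 1
  · omega
  · have hsub : A ⊆ {a, b} := by
      intro x hx
      obtain ⟨y, hy, hyx⟩ := Finset.exists_mem_ne (s := A) (by omega) x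
      have h1 : ¬ x ≤ y := hA (by exact_mod_cast hx) (by exact_mod_cast hy) (Ne.symm hyx)
      have h2 : ¬ y ≤ x := hA (by exact_mod_cast hy) (by exact_mod_cast hx) hyx
      rcases hu x y h1 h2 with ⟨rfl, _⟩ | ⟨rfl, _⟩
      · exact Finset.mem_insert_self _ _
      · exact Finset.mem_insert_of_mem (Finset.mem_singleton_self _)
    calc A.card ≤ ({a, b} : Finset P).card := Finset.card_le_card hsub
      _ ≤ 2 := Finset.card_insert_le _ _ |>.trans (by simp)

lemma widthP_eq_two (h : GoodP P) : widthP P = 2 := by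
  classical
  obtain ⟨a, b, ⟨hab, hba⟩, hu⟩ := h
  have hne : a ≠ b := fun he => hab (he ▸ le_refl a)
  have h2 : (2 : ℕ) ∈ {k : ℕ | ∃ A : Finset P, IsAntichain (· ≤ ·) (A : Set P) ∧ A.card = k} := by
    refine ⟨{a, b}, ?_, Finset.card_pair hne⟩
    simpa using antichain_pair hab hba
  have hb : ∀ k ∈ {k : ℕ | ∃ A : Finset P, IsAntichain (· ≤ ·) (A : Set P) ∧ A.card = k}, k ≤ 2 := by
    rintro k ⟨A, hA, rfl⟩
    exact antichain_subset_pair ⟨a, b, ⟨hab, hba⟩, hu⟩ A hA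
  refine le_antisymm (csSup_le ⟨2, h2⟩ hb) (le_csSup ⟨2, hb⟩ h2)

lemma ak2_unique (h : GoodP P) :
    Nonempty (AkSet P 2) ∧ Subsingleton (AkSet P 2) := by
  classical
  obtain ⟨a, b, ⟨hab, hba⟩, hu⟩ := h
  have hne : a ≠ b := fun he => hab (he ▸ le_refl a)
  have key : ∀ A : Finset P, IsAntichain (· ≤ ·) (A : Set P) → A.card = 2 →
      A = {a, b} := by
    intro A hA hc
    have hsub : A ⊆ {a, b} := by
      intro x hx
      obtain ⟨y, hy, hyx⟩ := Finset.exists_mem_ne (s := A) (by omega) x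
      have h1 : ¬ x ≤ y := hA (by exact_mod_cast hx) (by exact_mod_cast hy) (Ne.symm hyx)
      have h2 : ¬ y ≤ x := hA (by exact_mod_cast hy) (by exact_mod_cast hx) hyx
      rcases hu x y h1 h2 with ⟨rfl, _⟩ | ⟨rfl, _⟩
      · exact Finset.mem_insert_self _ _
      · exact Finset.mem_insert_of_mem (Finset.mem_singleton_self _)
    exact Finset.eq_of_subset_of_card_le hsub (by rw [hc, Finset.card_pair hne])
  constructor
  · exact ⟨⟨{a, b}, by simpa using antichain_pair hab hba, Finset.card_pair hne⟩⟩
  · refine ⟨fun A B => ?_⟩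
    apply Subtype.ext
    rw [key A.1 A.2.1 A.2.2, key B.1 B.2.1 B.2.2]

lemma ak0_unique :
    Nonempty (AkSet P 0) ∧ Subsingleton (AkSet P 0) := by
  constructor
  · exact ⟨⟨∅, by simp [IsAntichain], Finset.card_empty⟩⟩
  · refine ⟨fun A B => ?_⟩
    apply Subtype.ext
    rw [Finset.card_eq_zero.mp A.2.2, Finset.card_eq_zero.mp B.2.2]

lemma prec_singleton {A B : AkSet P 1} {α β : P}
    (hA : A.carrier = {α}) (hB : B.carrier = {β}) :
    PrecK A B ↔ α < β := by
  constructor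
  · rintro ⟨u, v, h1, h2, huv⟩
    rw [hA, hB] at h1 h2
    have hu : u ∈ ((({α} : Finset P) : Set P)) \ ((({β} : Finset P) : Set P)) := by
      rw [h1]; exact rfl
    have hv : v ∈ ((({β} : Finset P) : Set P)) \ ((({α} : Finset P) : Set P)) := by
      rw [h2]; exact rfl
    simp only [Set.mem_diff, Finset.coe_singleton, Set.mem_singleton_iff] at hu hv
    rw [← hu.1, ← hv.1]; exact huv
  · intro hlt
    have hne : α ≠ β := ne_of_lt hlt
    refine ⟨α, β, ?_, ?_, hlt⟩
    · rw [hA, hB]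
      ext z; simp only [Set.mem_diff, Finset.coe_singleton, Set.mem_singleton_iff]
      constructor
      · rintro ⟨rfl, _⟩; rfl
      · rintro rfl; exact ⟨rfl, hne⟩
    · rw [hA, hB]
      ext z; simp only [Set.mem_diff, Finset.coe_singleton, Set.mem_singleton_iff]
      constructor
      · rintro ⟨rfl, _⟩; rfl
      · rintro rfl; exact ⟨rfl, Ne.symm hne⟩

noncomputable def akOneIso : AkSet P 1 ≃o P := by
  classical
  have hsing : ∀ A : AkSet P 1, ∃ α : P, A.carrier = {α} := fun A =>
    Finset.card_eq_one.mp A.2.2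
  let f : AkSet P 1 → P := fun A => (hsing A).choose
  have hf : ∀ A : AkSet P 1, A.carrier = {f A} := fun A => (hsing A).choose_spec
  have hanti : ∀ x : P, IsAntichain (· ≤ ·) (({x} : Finset P) : Set P) := by
    intro x
    simp only [Finset.coe_singleton]
    exact Set.Subsingleton.isAntichain (Set.subsingleton_singleton) _
  let g : P → AkSet P 1 := fun x => ⟨{x}, hanti x, Finset.card_singleton x⟩
  have hgf : ∀ A, g (f A) = A := by
    intro A
    apply Subtype.ext
    exact (hf A).symm
  have hfg : ∀ x, f (g x) = x := by
    intro x
    have := hf (g x)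
    have hgx : (g x).carrier = {x} := rfl
    rw [hgx] at this
    exact (Finset.singleton_injective this).symm
  have hmap : ∀ A B : AkSet P 1, f A ≤ f B ↔ A ≤ B := by
    intro A B
    constructor
    · intro hle
      rcases eq_or_lt_of_le hle with he | hlt
      · have : A = B := by
          apply Subtype.ext
          have h := hf A
          rw [he] at h
          show A.carrier = B.carrier
          rw [h, ← hf B]
        exact this ▸ Relation.ReflTransGen.refl
      · exact Relation.ReflTransGen.single ((prec_singleton (hf A) (hf B)).mpr hlt)
    · intro hle
      induction hle with
      | refl => exact le_refl _
      | tail _ hstep ih =>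
        rename_i C D _
        exact ih.trans (le_of_lt ((prec_singleton (hf C) (hf D)).mp hstep))
  exact
    { toFun := f
      invFun := g
      left_inv := hgf
      right_inv := hfg
      map_rel_iff' := fun {A B} => hmap A B }

end Consequences

/-- For `P = J^m([2] × [2])`: the width of `P` is `2`; `A_2(P)` is a singleton
(`P` has exactly one antichain of size `2`); `A_0(P)` is a singleton; and
`(A_1(P), ≤_1)` is isomorphic to `P`. -/
theorem stmt17 (m : ℕ) :
    widthP (Jiter (Box 2 2) m) = 2 ∧
    (Nonempty (AkSet (Jiter (Box 2 2) m) 2) ∧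
      Subsingleton (AkSet (Jiter (Box 2 2) m) 2)) ∧
    (Nonempty (AkSet (Jiter (Box 2 2) m) 0) ∧
      Subsingleton (AkSet (Jiter (Box 2 2) m) 0)) ∧
    Nonempty (AkSet (Jiter (Box 2 2) m) 1 ≃o Jiter (Box 2 2) m) := by
  have hg := goodP_jiter m
  exact ⟨widthP_eq_two hg, ⟨(ak2_unique hg).1, (ak2_unique hg).2⟩, ak0_unique, ⟨akOneIso⟩⟩
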